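/- In a synchronous system in which the agent has perfect recall, if two runs are indistinguishable to the agent at time m+1 then they are indistinguishable at time m: for all runs r, r' ∈ ℛ and all times m, if r(m+1) = r'(m+1) then r(m) = r'(m). (Equivalently, the agent's information sets refine over time: (r,m+1) ∈ K(r',m+1) implies (r,m) ∈ K(r',m).) -/
import Mathlib


open scoped Classical

namespace SBP

variable {L : Type*}

/-- A point: a run together with a time. -/
abbrev Point (L : Type*) := (ℕ → L) × ℕ

/-- The information set `K(r,m)`: all points `(r',m')` with `r' ∈ ℛ` and `r' m' = r m`. -/
def K (ℛ : Finset (ℕ → L)) (r : ℕ → L) (m : ℕ) : Set (Point L) :=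
  {p | p.1 ∈ ℛ ∧ p.1 p.2 = r m}

/-- `ℛ(U)`: the runs of `ℛ` passing through some point of `U`. -/
noncomputable def runsOf (ℛ : Finset (ℕ → L)) (U : Set (Point L)) : Finset (ℕ → L) :=
  ℛ.filter fun r' => ∃ m', (r', m') ∈ U

/-- A system is synchronous if indistinguishable points occur at the same time. -/
def Synchronous (ℛ : Finset (ℕ → L)) : Prop :=
  ∀ r ∈ ℛ, ∀ r' ∈ ℛ, ∀ m m' : ℕ, r m = r' m' → m = m'

/-- The local-state sequence of run `r` at time `m`:
`r 0, r 1, …, r m` with consecutive repetitions removed. -/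
noncomputable def lseq (r : ℕ → L) (m : ℕ) : List L :=
  ((List.range (m + 1)).map r).destutter (· ≠ ·)

/-- Perfect recall: indistinguishable points have the same local-state sequence. -/
def PerfectRecall (ℛ : Finset (ℕ → L)) : Prop :=
  ∀ r ∈ ℛ, ∀ r' ∈ ℛ, ∀ m m' : ℕ, r m = r' m' → lseq r m = lseq r' m'

/-- A run-based event: contains all points of a run or none of them. -/
def RunBased (U : Set (Point L)) : Prop :=
  ∀ (r' : ℕ → L) (k k' : ℕ), (r', k) ∈ U → (r', k') ∈ U

/-- The probability of a (finite) set of runs. -/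
noncomputable def PrS (pr : (ℕ → L) → ℝ) (S : Finset (ℕ → L)) : ℝ := ∑ r ∈ S, pr r

/-- `n_{(r,m)}(r')`: the number of points of the information set `K(r,m)` lying on run `r'`. -/
noncomputable def npts (r : ℕ → L) (m : ℕ) (r' : ℕ → L) : ℕ :=
  Nat.card {k : ℕ | r' k = r m}

/-- The Elga probability of a single point, for the agent at the point `(r,m)`. -/
noncomputable def elga (ℛ : Finset (ℕ → L)) (pr : (ℕ → L) → ℝ) (r : ℕ → L) (m : ℕ)
    (p : Point L) : ℝ :=
  if p ∈ K ℛ r m then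
    pr p.1 / ∑ r'' ∈ runsOf ℛ (K ℛ r m), pr r'' * (npts r m r'' : ℝ)
  else 0

private lemma destutter'_getLast? (l : List L) : ∀ a : L,
    (l.destutter' (· ≠ ·) a).getLast? = (a :: l).getLast? := by
  induction l with
  | nil => intro a; simp [List.destutter'_nil]
  | cons b l ih =>
    intro a
    rw [List.destutter'_cons]
    split_ifs with h
    · cases hd : l.destutter' (· ≠ ·) b with
      | nil => exact absurd hd (List.destutter'_ne_nil _ _)
      | cons c t =>
        rw [List.getLast?_cons_cons, ← hd, ih b, List.getLast?_cons_cons]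
    · rw [not_not] at h
      subst h
      rw [ih a, List.getLast?_cons_cons]

private lemma destutter'_concat (l : List L) : ∀ a b : L,
    (l ++ [b]).destutter' (· ≠ ·) a =
      if (a :: l).getLast? = some b then l.destutter' (· ≠ ·) a
      else l.destutter' (· ≠ ·) a ++ [b] := by
  induction l with
  | nil =>
    intro a b
    simp only [List.nil_append, List.destutter'_nil, List.getLast?_singleton]
    rw [List.destutter'_singleton]
    by_cases h : a = b <;> simp [h, Ne, eq_comm]
  | cons c l ih =>
    intro a b
    rw [List.cons_append, List.destutter'_cons, List.destutter'_cons]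
    by_cases h : a ≠ c
    · rw [if_pos h, if_pos h, ih, List.getLast?_cons_cons]
      split_ifs <;> rfl
    · rw [if_neg h, if_neg h, ih, not_not] at *
      subst h
      rw [List.getLast?_cons_cons]

private lemma destutter_getLast? (l : List L) :
    (l.destutter (· ≠ ·)).getLast? = l.getLast? := by
  cases l with
  | nil => rfl
  | cons a t => rw [List.destutter_cons', destutter'_getLast?]

private lemma lseq_getLast? (r : ℕ → L) (m : ℕ) : (lseq r m).getLast? = some (r m) := by
  rw [lseq, destutter_getLast?, List.range_succ, List.map_append, List.map_singleton,
    List.getLast?_concat]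

private lemma lseq_succ (r : ℕ → L) (m : ℕ) :
    lseq r (m + 1) = if r m = r (m + 1) then lseq r m
      else lseq r m ++ [r (m + 1)] := by
  have hne : (List.range (m + 1)).map r ≠ [] := by simp
  rw [lseq, List.range_succ, List.map_append, List.map_singleton]
  cases hl : (List.range (m + 1)).map r with
  | nil => exact absurd hl hne
  | cons a t =>
    rw [List.cons_append, List.destutter_cons', destutter'_concat, lseq, hl,
      List.destutter_cons']
    have : (a :: t).getLast? = some (r m) := by
      rw [← hl, List.range_succ, List.map_append, List.map_singleton,
        List.getLast?_concat]
    rw [this]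
    simp only [Option.some_inj]

/-- In a synchronous system in which the agent has perfect recall, runs that are
indistinguishable to the agent at time `m+1` are indistinguishable at time `m`. -/
theorem info_sets_refine (ℛ : Finset (ℕ → L)) (hne : ℛ.Nonempty)
    (hsync : Synchronous ℛ) (hrec : PerfectRecall ℛ)
    (r r' : ℕ → L) (hr : r ∈ ℛ) (hr' : r' ∈ ℛ) (m : ℕ)
    (h : r (m + 1) = r' (m + 1)) :
    r m = r' m := by
  by_cases h1 : r m = r (m + 1)
  · by_cases h2 : r' m = r' (m + 1)
    · rw [h1, h, ← h2]
    · exact absurd (hsync r hr r' hr' m (m + 1) (h1.trans h)) (by omega)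
  · by_cases h2 : r' m = r' (m + 1)
    · exact absurd (hsync r' hr' r hr m (m + 1) (h2.trans h.symm)) (by omega)
    · have hls := hrec r hr r' hr' (m + 1) (m + 1) h
      rw [lseq_succ, if_neg h1, lseq_succ, if_neg h2, h] at hls
      have h3 : lseq r m = lseq r' m := List.append_cancel_right hls
      have h4 := (lseq_getLast? r m).symm.trans ((congrArg List.getLast? h3).trans
        (lseq_getLast? r' m))
      exact Option.some.inj h4

end SBP
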